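/- For every finite knowledge graph G there is, up to isomorphism, a unique knowledge graph H such that (1) H is a relation-preserving core, and (2) there exist relation-preserving homomorphisms from G to H and from H to G. (Uniqueness part: if H1 and H2 both satisfy (1) and (2) with respect to G, then H1 and H2 are isomorphic as knowledge graphs.) -/
import Mathlib


structure KG (N Rel : Type*) where
  V : Set N
  R : Set Rel
  E : Set (N × Rel × N)
  wf : ∀ e ∈ E, e.1 ∈ V ∧ e.2.1 ∈ R ∧ e.2.2 ∈ V

/-- A (node-relation) homomorphism from `G` to `G'`, given by maps `π` on nodes and
`φ` on relations: it maps nodes of `G` to nodes of `G'`, relations to relations,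
and every fact `r(u,v)` of `G` to the fact `φ(r)(π(u),π(v))` of `G'`. -/
def IsHom {N₁ R₁ N₂ R₂ : Type*} (G : KG N₁ R₁) (G' : KG N₂ R₂)
    (π : N₁ → N₂) (φ : R₁ → R₂) : Prop :=
  (∀ v ∈ G.V, π v ∈ G'.V) ∧ (∀ r ∈ G.R, φ r ∈ G'.R) ∧
    ∀ u r v, (u, r, v) ∈ G.E → (π u, φ r, π v) ∈ G'.E

/-- A relation-preserving homomorphism: a homomorphism with `R ⊆ R'` and `φ(R) = R`. -/
def IsRelPresHom {N₁ N₂ Rel : Type*} (G : KG N₁ Rel) (G' : KG N₂ Rel)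
    (π : N₁ → N₂) (φ : Rel → Rel) : Prop :=
  IsHom G G' π φ ∧ G.R ⊆ G'.R ∧ φ '' G.R = G.R

/-- The image `h(G)` of a knowledge graph under a homomorphism `(π, φ)`. -/
def kgImage {N₁ R₁ N₂ R₂ : Type*} (G : KG N₁ R₁) (π : N₁ → N₂) (φ : R₁ → R₂) :
    KG N₂ R₂ where
  V := π '' G.V
  R := φ '' G.R
  E := (fun e => (π e.1, φ e.2.1, π e.2.2)) '' G.E
  wf := by
    rintro e ⟨⟨u, r, v⟩, he, rfl⟩
    obtain ⟨h1, h2, h3⟩ := G.wf _ he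
    exact ⟨⟨u, h1, rfl⟩, ⟨r, h2, rfl⟩, ⟨v, h3, rfl⟩⟩

/-- `H` is a relation-preserving core: every relation-preserving homomorphism
from `H` to itself is onto, i.e. its image is all of `H`. -/
def IsRPCore {N Rel : Type*} (H : KG N Rel) : Prop :=
  ∀ (π : N → N) (φ : Rel → Rel), IsRelPresHom H H π φ → kgImage H π φ = H

/-- Isomorphism of knowledge graphs: a pair of bijections between the node sets and
the relation sets preserving facts in both directions. -/
def IsIso {N₁ R₁ N₂ R₂ : Type*} (G : KG N₁ R₁) (G' : KG N₂ R₂) : Prop :=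
  ∃ (π : N₁ → N₂) (φ : R₁ → R₂),
    Set.BijOn π G.V G'.V ∧ Set.BijOn φ G.R G'.R ∧
    ∀ u r v, u ∈ G.V → r ∈ G.R → v ∈ G.V →
      ((u, r, v) ∈ G.E ↔ (π u, φ r, π v) ∈ G'.E)


lemma isHom_comp {N₁ R₁ N₂ R₂ N₃ R₃ : Type*} {G₁ : KG N₁ R₁} {G₂ : KG N₂ R₂}
    {G₃ : KG N₃ R₃} {π : N₁ → N₂} {φ : R₁ → R₂} {π' : N₂ → N₃} {φ' : R₂ → R₃}
    (h : IsHom G₁ G₂ π φ) (h' : IsHom G₂ G₃ π' φ') :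
    IsHom G₁ G₃ (π' ∘ π) (φ' ∘ φ) :=
  ⟨fun v hv => h'.1 _ (h.1 v hv), fun r hr => h'.2.1 _ (h.2.1 r hr),
    fun u r v he => h'.2.2 _ _ _ (h.2.2 u r v he)⟩

/-- Uniqueness of the relation-preserving core: if `H₁` and `H₂` are both
relation-preserving cores admitting relation-preserving homomorphisms to and
from the finite knowledge graph `G`, then `H₁` and `H₂` are isomorphic. -/
theorem rpCore_unique {N Rel : Type*} (G H₁ H₂ : KG N Rel)
    (hGV : G.V.Finite) (hGR : G.R.Finite) (hGE : G.E.Finite)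
    (h1core : IsRPCore H₁) (h2core : IsRPCore H₂)
    (hGtoH1 : ∃ π φ, IsRelPresHom G H₁ π φ)
    (hH1toG : ∃ π φ, IsRelPresHom H₁ G π φ)
    (hGtoH2 : ∃ π φ, IsRelPresHom G H₂ π φ)
    (hH2toG : ∃ π φ, IsRelPresHom H₂ G π φ) :
    IsIso H₁ H₂ := by
  obtain ⟨a, α, ha⟩ := hGtoH1
  obtain ⟨b, β, hb⟩ := hH1toG
  obtain ⟨c, γ, hc⟩ := hGtoH2
  obtain ⟨d, δ, hd⟩ := hH2toG
  have hR1 : H₁.R = G.R := Set.Subset.antisymm hb.2.1 ha.2.1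
  have hR2 : H₂.R = G.R := Set.Subset.antisymm hd.2.1 hc.2.1
  have hR12 : H₁.R = H₂.R := hR1.trans hR2.symm
  -- self-hom of H₁ through G
  have h1self : IsRelPresHom H₁ H₁ (a ∘ b) (α ∘ β) := by
    refine ⟨isHom_comp hb.1 ha.1, subset_rfl, ?_⟩
    rw [Set.image_comp, hb.2.2, hR1, ha.2.2, ← hR1]
  have hcore1 := h1core _ _ h1self
  have hV1 : H₁.V.Finite := by
    have h := congrArg KG.V hcore1
    refine (hGV.image a).subset ?_
    rw [← h]
    rintro x ⟨y, hy, rfl⟩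
    exact ⟨b y, hb.1.1 y hy, rfl⟩
  have hRf1 : H₁.R.Finite := hR1 ▸ hGR
  have hE1 : H₁.E.Finite := by
    have h := congrArg KG.E hcore1
    refine (hGE.image (fun e => (a e.1, α e.2.1, a e.2.2))).subset ?_
    rw [← h]
    rintro x ⟨⟨u, r, v⟩, he, rfl⟩
    exact ⟨(b u, β r, b v), hb.1.2.2 u r v he, rfl⟩
  -- self-hom of H₂ through G (for symmetry we don't need finiteness of H₂ separately,
  -- but we do need the cross maps)
  have hf : IsRelPresHom H₁ H₂ (c ∘ b) (γ ∘ β) := by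
    refine ⟨isHom_comp hb.1 hc.1, hR12.le, ?_⟩
    rw [Set.image_comp, hb.2.2, hR1, hc.2.2, ← hR1]
  have hg : IsRelPresHom H₂ H₁ (a ∘ d) (α ∘ δ) := by
    refine ⟨isHom_comp hd.1 ha.1, hR12.ge, ?_⟩
    rw [Set.image_comp, hd.2.2, hR2, ha.2.2, ← hR2]
  have hgf : IsRelPresHom H₁ H₁ ((a ∘ d) ∘ (c ∘ b)) ((α ∘ δ) ∘ (γ ∘ β)) := by
    refine ⟨isHom_comp hf.1 hg.1, subset_rfl, ?_⟩
    rw [Set.image_comp, hf.2.2, hR12, hg.2.2, ← hR12]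
  have hfg : IsRelPresHom H₂ H₂ ((c ∘ b) ∘ (a ∘ d)) ((γ ∘ β) ∘ (α ∘ δ)) := by
    refine ⟨isHom_comp hg.1 hf.1, subset_rfl, ?_⟩
    rw [Set.image_comp, hg.2.2, ← hR12, hf.2.2, hR12]
  have hcoreT := h1core _ _ hgf
  have hcoreS := h2core _ _ hfg
  set t := (a ∘ d) ∘ (c ∘ b) with ht
  set χ := (α ∘ δ) ∘ (γ ∘ β) with hχ
  have tV : t '' H₁.V = H₁.V := congrArg KG.V hcoreT
  have tR : χ '' H₁.R = H₁.R := congrArg KG.R hcoreT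
  have tE : (fun e => (t e.1, χ e.2.1, t e.2.2)) '' H₁.E = H₁.E := congrArg KG.E hcoreT
  have sV : ((c ∘ b) ∘ (a ∘ d)) '' H₂.V = H₂.V := congrArg KG.V hcoreS
  have sR : ((γ ∘ β) ∘ (α ∘ δ)) '' H₂.R = H₂.R := congrArg KG.R hcoreS
  -- injectivity of the self-maps on the finite node/relation sets
  have tMaps : Set.MapsTo t H₁.V H₁.V := fun v hv => hgf.1.1 v hv
  have tBij : Set.BijOn t H₁.V H₁.V :=
    (hV1.surjOn_iff_bijOn_of_mapsTo tMaps).1 tV.ge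
  have tInj : Set.InjOn t H₁.V := tBij.injOn
  have χMaps : Set.MapsTo χ H₁.R H₁.R := fun r hr => hgf.1.2.1 r hr
  have χBij : Set.BijOn χ H₁.R H₁.R :=
    (hRf1.surjOn_iff_bijOn_of_mapsTo χMaps).1 tR.ge
  have χInj : Set.InjOn χ H₁.R := χBij.injOn
  refine ⟨c ∘ b, γ ∘ β, ⟨fun v hv => hf.1.1 v hv, ?_, ?_⟩,
    ⟨fun r hr => hf.1.2.1 r hr, ?_, ?_⟩, ?_⟩
  · intro x hx y hy hxy
    exact tInj hx hy (congrArg (a ∘ d) hxy)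
  · intro x hx
    rw [← sV] at hx
    obtain ⟨y, hy, rfl⟩ := hx
    exact ⟨(a ∘ d) y, hg.1.1 y hy, rfl⟩
  · intro x hx y hy hxy
    exact χInj hx hy (congrArg (α ∘ δ) hxy)
  · intro x hx
    rw [← sR] at hx
    obtain ⟨y, hy, rfl⟩ := hx
    exact ⟨(α ∘ δ) y, hg.1.2.1 y hy, rfl⟩
  · intro u r v hu hr hv
    constructor
    · exact hf.1.2.2 u r v
    · intro h2
      have h1 : (t u, χ r, t v) ∈ H₁.E := hg.1.2.2 _ _ _ h2
      rw [← tE] at h1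
      obtain ⟨⟨u', r', v'⟩, he', heq⟩ := h1
      obtain ⟨hu', hr', hv'⟩ := H₁.wf _ he'
      simp only [Prod.mk.injEq] at heq
      obtain ⟨e1, e2, e3⟩ := heq
      obtain rfl : u' = u := tInj hu' hu e1
      obtain rfl : r' = r := χInj hr' hr e2
      obtain rfl : v' = v := tInj hv' hv e3
      exact he'
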